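/- Let $X$ be a compact metric space and $f:X\to X$ a continuous map. For any $x,y\in X$, if $\liminf_{n\to\infty}\frac{1}{n}\sum_{i=0}^{n-1}d(f^i(x),f^i(y))=0$, then $\overline{\omega}(x,f)\cap\overline{\omega}(y,f)\ne\emptyset$. -/

import Mathlib

open Filter Metric Set
open scoped Classical Topology

noncomputable def upperDensity (A : Set ℕ) : ℝ :=
  Filter.limsup
    (fun n : ℕ => (((Finset.range n).filter (fun i => i ∈ A)).card : ℝ) / n) Filter.atTop

def HasDensityOne (A : Set ℕ) : Prop :=
  Filter.Tendsto
    (fun n : ℕ => (((Finset.range n).filter (fun i => i ∈ A)).card : ℝ) / n) Filter.atTop (nhds 1)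

def omegaBarSeq {X : Type*} [MetricSpace X] (x : ℕ → X) : Set X :=
  {y | ∀ ε > 0, 0 < upperDensity {i | dist (x i) y < ε}}

def omegaBar {X : Type*} [MetricSpace X] (f : X → X) (x : X) : Set X :=
  omegaBarSeq (fun i => f^[i] x)

/-- Auxiliary: empirical frequency of a set of naturals up to `n`. -/
noncomputable def cnt (A : Set ℕ) (n : ℕ) : ℝ :=
  (((Finset.range n).filter (fun i => i ∈ A)).card : ℝ) / n

lemma upperDensity_eq_limsup_cnt (A : Set ℕ) :
    upperDensity A = Filter.limsup (fun n => cnt A n) Filter.atTop := rfl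

lemma cnt_nonneg (A : Set ℕ) (n : ℕ) : 0 ≤ cnt A n := by
  unfold cnt; positivity

lemma cnt_le_one (A : Set ℕ) (n : ℕ) : cnt A n ≤ 1 := by
  rcases Nat.eq_zero_or_pos n with hn | hn
  · simp [cnt, hn]
  · rw [cnt, div_le_one (by exact_mod_cast hn)]
    exact_mod_cast (Finset.card_filter_le _ _).trans (Finset.card_range n).le

lemma cnt_mono {A B : Set ℕ} (h : A ⊆ B) (n : ℕ) : cnt A n ≤ cnt B n := by
  rcases Nat.eq_zero_or_pos n with hn | hn
  · simp [cnt, hn]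
  · unfold cnt
    apply div_le_div_of_nonneg_right ?_ (Nat.cast_nonneg n)
    exact_mod_cast Finset.card_le_card
      (Finset.monotone_filter_right _ (fun i _ hi => h hi))

lemma cnt_le_sum {β : Type*} (t : Finset β) (A : Set ℕ) (B : β → Set ℕ)
    (h : ∀ i ∈ A, ∃ z ∈ t, i ∈ B z) (n : ℕ) :
    cnt A n ≤ ∑ z ∈ t, cnt (B z) n := by
  rcases Nat.eq_zero_or_pos n with hn | hn
  · simp only [cnt, hn]
    simp only [Nat.cast_zero, div_zero]
    exact Finset.sum_nonneg fun z _ => le_refl 0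
  · have hsub : (Finset.range n).filter (fun i => i ∈ A) ⊆
        t.biUnion (fun z => (Finset.range n).filter (fun i => i ∈ B z)) := by
      intro i hi
      rw [Finset.mem_filter] at hi
      obtain ⟨z, hz, hiz⟩ := h i hi.2
      exact Finset.mem_biUnion.2 ⟨z, hz, Finset.mem_filter.2 ⟨hi.1, hiz⟩⟩
    have hcard : ((Finset.range n).filter (fun i => i ∈ A)).card ≤
        ∑ z ∈ t, ((Finset.range n).filter (fun i => i ∈ B z)).card :=
      (Finset.card_le_card hsub).trans (Finset.card_biUnion_le)
    unfold cnt
    rw [← Finset.sum_div]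
    apply div_le_div_of_nonneg_right ?_ (Nat.cast_nonneg n)
    exact_mod_cast hcard

lemma cnt_le_add {A B C : Set ℕ} (h : A ⊆ B ∪ C) (n : ℕ) :
    cnt A n ≤ cnt B n + cnt C n := by
  have := cnt_le_sum (t := ({true, false} : Finset Bool)) A
    (fun b => if b then B else C) (fun i hi => by
      rcases h hi with hB | hC
      · exact ⟨true, by simp, by simpa⟩
      · exact ⟨false, by simp, by simpa⟩) n
  simpa using this

theorem stmt4 {X : Type*} [MetricSpace X] [CompactSpace X] (f : X → X) (hf : Continuous f)
    (x y : X)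
    (h : Filter.liminf
      (fun n : ℕ => (∑ i ∈ Finset.range n, dist (f^[i] x) (f^[i] y)) / n)
      Filter.atTop = 0) :
    (omegaBar f x ∩ omegaBar f y).Nonempty := by
  classical
  set a : ℕ → X := fun i => f^[i] x with ha
  set b : ℕ → X := fun i => f^[i] y with hb
  set avg : ℕ → ℝ := fun n => (∑ i ∈ Finset.range n, dist (a i) (b i)) / n with havgdef
  have havg_nonneg : ∀ n, 0 ≤ avg n := fun n => by positivity
  have havg_bdd : ∀ n, avg n ≤ Metric.diam (univ : Set X) := by
    intro n
    rcases Nat.eq_zero_or_pos n with hn | hn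
    · simp [havgdef, hn, Metric.diam_nonneg]
    · rw [havgdef, div_le_iff₀ (by exact_mod_cast hn)]
      calc ∑ i ∈ Finset.range n, dist (a i) (b i)
          ≤ ∑ _i ∈ Finset.range n, Metric.diam (univ : Set X) :=
            Finset.sum_le_sum fun i _ =>
              Metric.dist_le_diam_of_mem isBounded_of_compactSpace trivial trivial
        _ = Metric.diam (univ : Set X) * n := by
            rw [Finset.sum_const, Finset.card_range, nsmul_eq_mul, mul_comm]
  -- extract a subsequence along which the averages tend to 0
  have hfreq : ∀ m : ℕ, ∃ᶠ k in atTop, avg k < 1 / (m + 1) := by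
    intro m
    apply frequently_lt_of_liminf_lt
      (isCoboundedUnder_ge_of_le _ havg_bdd)
    rw [h]; positivity
  obtain ⟨φ, hφ, hφ'⟩ := extraction_forall_of_frequently hfreq
  have havgφ : Tendsto (fun m => avg (φ m)) atTop (𝓝 0) := by
    apply squeeze_zero (fun m => havg_nonneg _) (fun m => (hφ' m).le)
    simpa using tendsto_one_div_add_atTop_nhds_zero_nat (𝕜 := ℝ)
  -- The positivity notion along the subsequence
  set P : Set ℕ → Prop := fun S => ∃ δ : ℝ, 0 < δ ∧ ∃ᶠ k in atTop, δ ≤ cnt S (φ k) with hPdef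
  have hP_to_density : ∀ (S : Set ℕ) (A : Set ℕ), S ⊆ A → P S → 0 < upperDensity A := by
    intro S A hSA ⟨δ, hδ, hfr⟩
    have hfr' : ∃ᶠ n in atTop, δ ≤ cnt A n := by
      have h1 : ∃ᶠ n in Filter.map φ atTop, δ ≤ cnt A n := by
        rw [Filter.frequently_map]
        exact hfr.mono fun k hk => hk.trans (cnt_mono hSA _)
      exact h1.filter_mono hφ.tendsto_atTop
    have : δ ≤ upperDensity A := by
      rw [upperDensity_eq_limsup_cnt]
      exact le_limsup_of_frequently_le hfr'
        (isBoundedUnder_of ⟨1, fun n => cnt_le_one A n⟩)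
    linarith
  have hP_nonempty : ∀ S : Set ℕ, P S → S.Nonempty := by
    intro S ⟨δ, hδ, hfr⟩
    obtain ⟨k, hk⟩ := hfr.exists
    by_contra hS
    rw [Set.not_nonempty_iff_eq_empty] at hS
    subst hS
    simp only [cnt, Set.mem_empty_iff_false, Finset.filter_false, Finset.card_empty,
      Nat.cast_zero, zero_div] at hk
    linarith
  -- covering step
  have hstep : ∀ S : Set ℕ, P S → ∀ r : ℝ, 0 < r → ∃ z : X,
      P (S ∩ {i | a i ∈ closedBall z r}) := by
    intro S hS r hr
    obtain ⟨t, -, htfin, htcov⟩ := finite_cover_balls_of_compact (isCompact_univ : IsCompact (Set.univ : Set X)) hr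
    set T : Finset X := htfin.toFinset with hT
    have hTcov : ∀ w : X, ∃ z ∈ T, w ∈ ball z r := by
      intro w
      have := htcov (Set.mem_univ w)
      simp only [Set.mem_iUnion, exists_prop] at this
      obtain ⟨z, hz, hw⟩ := this
      exact ⟨z, htfin.mem_toFinset.2 hz, hw⟩
    have hTne : T.Nonempty := by
      obtain ⟨z, hz, -⟩ := hTcov x
      exact ⟨z, hz⟩
    have hTcard : (0 : ℝ) < T.card := by exact_mod_cast Finset.card_pos.2 hTne
    obtain ⟨δ, hδ, hfr⟩ := hS
    have hfr2 : ∃ᶠ k in atTop, ∃ z ∈ T,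
        δ / T.card ≤ cnt (S ∩ {i | a i ∈ closedBall z r}) (φ k) := by
      refine hfr.mono fun k hk => ?_
      have hcov : ∀ i ∈ S, ∃ z ∈ T, i ∈ S ∩ {j | a j ∈ closedBall z r} := by
        intro i hi
        obtain ⟨z, hz, hiz⟩ := hTcov (a i)
        exact ⟨z, hz, hi, ball_subset_closedBall hiz⟩
      have hsum := cnt_le_sum T S (fun z => S ∩ {j | a j ∈ closedBall z r}) hcov (φ k)
      have : ∑ _z ∈ T, δ / T.card ≤ ∑ z ∈ T, cnt (S ∩ {j | a j ∈ closedBall z r}) (φ k) := by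
        rw [Finset.sum_const, nsmul_eq_mul, mul_div_cancel₀ _ (ne_of_gt hTcard)]
        exact hk.trans hsum
      exact Finset.exists_le_of_sum_le hTne this
    by_contra hcon
    push_neg at hcon
    have hev : ∀ᶠ k in atTop, ∀ z ∈ T,
        cnt (S ∩ {i | a i ∈ closedBall z r}) (φ k) < δ / T.card := by
      rw [Filter.eventually_all_finset]
      intro z _
      have hz := hcon z
      simp only [hPdef] at hz
      push_neg at hz
      have := hz (δ / (T.card : ℝ)) (by positivity)
      exact this
    obtain ⟨k, ⟨z, hz, hk1⟩, hk2⟩ := (hfr2.and_eventually hev).exists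
    exact absurd hk1 (not_le.2 (hk2 z hz))
  -- universe has positive density
  have hPuniv : P univ := by
    refine ⟨1, one_pos, Eventually.frequently ?_⟩
    filter_upwards [eventually_ge_atTop 1] with k hk
    have hk1 : 1 ≤ φ k := le_trans hk (hφ.le_apply)
    have hne : ((φ k : ℕ) : ℝ) ≠ 0 := Nat.cast_ne_zero.2 (by omega)
    unfold cnt
    simp only [Set.mem_univ, Finset.filter_true, Finset.card_range]
    rw [div_self hne]
  -- recursive construction of nested sets
  have hhalf : ∀ m : ℕ, (0 : ℝ) < (1 / 2 : ℝ) ^ (m + 1) := fun m => by positivity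
  let step2 : {S : Set ℕ // P S} → ℕ → {S : Set ℕ // P S} × X := fun p m =>
    (⟨p.1 ∩ {i | a i ∈ closedBall (hstep p.1 p.2 _ (hhalf m)).choose ((1 / 2 : ℝ) ^ (m + 1))},
      (hstep p.1 p.2 _ (hhalf m)).choose_spec⟩, (hstep p.1 p.2 _ (hhalf m)).choose)
  let T : ℕ → {S : Set ℕ // P S} × X := fun m =>
    Nat.rec (⟨⟨univ, hPuniv⟩, x⟩) (fun m q => step2 q.1 m) m
  set S : ℕ → Set ℕ := fun m => ((T m).1 : Set ℕ) with hSdef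
  set z : ℕ → X := fun m => (T m).2 with hzdef
  have hSsucc : ∀ m, S (m + 1) = S m ∩ {i | a i ∈ closedBall (z (m + 1)) ((1 / 2 : ℝ) ^ (m + 1))} :=
    fun m => rfl
  have hP : ∀ m, P (S m) := fun m => (T m).1.2
  have hSne : ∀ m, (S m).Nonempty := fun m => hP_nonempty _ (hP m)
  -- distances between consecutive centers
  have hzdist : ∀ m, dist (z (m + 1)) (z (m + 2)) ≤ 1 * (1 / 2 : ℝ) ^ m := by
    intro m
    obtain ⟨i, hi⟩ := hSne (m + 2)
    rw [hSsucc (m + 1)] at hi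
    have hi2 : a i ∈ closedBall (z (m + 2)) ((1 / 2 : ℝ) ^ (m + 2)) := hi.2
    have hi1 : i ∈ S (m + 1) := hi.1
    rw [hSsucc m] at hi1
    have hi1' : a i ∈ closedBall (z (m + 1)) ((1 / 2 : ℝ) ^ (m + 1)) := hi1.2
    have h1 : dist (z (m + 1)) (a i) ≤ (1 / 2 : ℝ) ^ (m + 1) := by
      rw [dist_comm]; exact mem_closedBall.1 hi1'
    have h2 : dist (a i) (z (m + 2)) ≤ (1 / 2 : ℝ) ^ (m + 2) := mem_closedBall.1 hi2
    calc dist (z (m + 1)) (z (m + 2)) ≤ dist (z (m + 1)) (a i) + dist (a i) (z (m + 2)) :=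
          dist_triangle _ _ _
      _ ≤ (1 / 2 : ℝ) ^ (m + 1) + (1 / 2 : ℝ) ^ (m + 2) := add_le_add h1 h2
      _ ≤ 1 * (1 / 2 : ℝ) ^ m := by ring_nf; nlinarith [pow_pos (by norm_num : (0:ℝ) < 1/2) m]
  set w : ℕ → X := fun m => z (m + 1) with hwdef
  have hwdist : ∀ m, dist (w m) (w (m + 1)) ≤ 1 * (1 / 2 : ℝ) ^ m := hzdist
  have hr2 : (1 / 2 : ℝ) < 1 := by norm_num
  have hcauchy : CauchySeq w := cauchySeq_of_le_geometric (1 / 2) 1 hr2 hwdist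
  obtain ⟨ζ, hζ⟩ := cauchySeq_tendsto_of_complete hcauchy
  have hwζ : ∀ m, dist (w m) ζ ≤ 1 * (1 / 2 : ℝ) ^ m / (1 - 1 / 2) :=
    fun m => dist_le_of_le_geometric_of_tendsto (1 / 2) 1 hr2 hwdist hζ m
  have hkey : ∀ m, ∀ i ∈ S (m + 1), dist (a i) ζ ≤ 3 * (1 / 2 : ℝ) ^ m := by
    intro m i hi
    rw [hSsucc m] at hi
    have h1 : dist (a i) (z (m + 1)) ≤ (1 / 2 : ℝ) ^ (m + 1) := mem_closedBall.1 hi.2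
    have h2 : dist (z (m + 1)) ζ ≤ 1 * (1 / 2 : ℝ) ^ m / (1 - 1 / 2) := hwζ m
    have hp : (0:ℝ) < (1/2:ℝ) ^ m := pow_pos (by norm_num) m
    calc dist (a i) ζ ≤ dist (a i) (z (m + 1)) + dist (z (m + 1)) ζ := dist_triangle _ _ _
      _ ≤ (1 / 2 : ℝ) ^ (m + 1) + 1 * (1 / 2 : ℝ) ^ m / (1 - 1 / 2) := add_le_add h1 h2
      _ ≤ 3 * (1 / 2 : ℝ) ^ m := by ring_nf; nlinarith
  have hpowto : Tendsto (fun m : ℕ => 3 * (1 / 2 : ℝ) ^ m) atTop (𝓝 0) := by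
    have := tendsto_pow_atTop_nhds_zero_of_lt_one (by norm_num : (0:ℝ) ≤ 1/2) hr2
    simpa using this.const_mul 3
  refine ⟨ζ, ?_, ?_⟩
  · -- ζ ∈ omegaBar f x
    intro ε hε
    obtain ⟨m, hm⟩ := (hpowto.eventually (gt_mem_nhds hε)).exists
    apply hP_to_density (S (m + 1)) _ ?_ (hP (m + 1))
    intro i hi
    exact lt_of_le_of_lt (hkey m i hi) hm
  · -- ζ ∈ omegaBar f y
    intro ε hε
    have hε2 : 0 < ε / 2 := by linarith
    obtain ⟨m, hm⟩ := (hpowto.eventually (gt_mem_nhds hε2)).exists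
    set E : Set ℕ := {i | dist (a i) (b i) < ε / 2} with hEdef
    set Ec : Set ℕ := {i | ε / 2 ≤ dist (a i) (b i)} with hEcdef
    -- the complement has vanishing frequency along the subsequence
    have hEcbound : ∀ n, cnt Ec n ≤ avg n / (ε / 2) := by
      intro n
      rcases Nat.eq_zero_or_pos n with hn | hn
      · simp only [cnt, hn]
        simp only [Nat.cast_zero, div_zero]
        positivity
      · have hc : ((((Finset.range n).filter (fun i => i ∈ Ec)).card : ℝ)) * (ε / 2) ≤
            ∑ i ∈ Finset.range n, dist (a i) (b i) := by
          have h1 := Finset.card_nsmul_le_sum ((Finset.range n).filter (fun i => i ∈ Ec))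
            (fun i => dist (a i) (b i)) (ε / 2) (fun i hi => (Finset.mem_filter.1 hi).2)
          rw [nsmul_eq_mul] at h1
          refine h1.trans (Finset.sum_le_sum_of_subset_of_nonneg (Finset.filter_subset _ _)
            fun i _ _ => dist_nonneg)
        have hc2 : ((((Finset.range n).filter (fun i => i ∈ Ec)).card : ℝ)) ≤
            (∑ i ∈ Finset.range n, dist (a i) (b i)) / (ε / 2) :=
          (le_div_iff₀ hε2).2 hc
        calc cnt Ec n
            = ((((Finset.range n).filter (fun i => i ∈ Ec)).card : ℝ)) / (n : ℝ) := rfl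
          _ ≤ ((∑ i ∈ Finset.range n, dist (a i) (b i)) / (ε / 2)) / (n : ℝ) :=
              div_le_div_of_nonneg_right hc2 (Nat.cast_nonneg n)
          _ = avg n / (ε / 2) := by simp only [havgdef]; ring
    have hEcto : Tendsto (fun k => cnt Ec (φ k)) atTop (𝓝 0) := by
      apply squeeze_zero (fun k => cnt_nonneg _ _) (fun k => hEcbound (φ k))
      have := havgφ.div_const (ε / 2)
      simpa using this
    obtain ⟨δ, hδ, hfr⟩ := hP (m + 1)
    have hev : ∀ᶠ k in atTop, cnt Ec (φ k) < δ / 2 :=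
      hEcto.eventually (gt_mem_nhds (by linarith))
    have hfr2 : ∃ᶠ k in atTop, δ / 2 ≤ cnt (S (m + 1) ∩ E) (φ k) := by
      refine (hfr.and_eventually hev).mono fun k ⟨hk1, hk2⟩ => ?_
      have hsub : S (m + 1) ⊆ (S (m + 1) ∩ E) ∪ Ec := by
        intro i hi
        by_cases hiE : i ∈ E
        · exact Or.inl ⟨hi, hiE⟩
        · right
          show ε / 2 ≤ dist (a i) (b i)
          exact le_of_not_gt (fun hlt => hiE hlt)
      have := cnt_le_add hsub (φ k)
      linarith
    refine hP_to_density (S (m + 1) ∩ E) _ ?_ ⟨δ / 2, half_pos hδ, hfr2⟩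
    rintro i ⟨hiS, hiE⟩
    have hbd : dist (b i) (a i) < ε / 2 := by rw [dist_comm]; exact hiE
    have haz : dist (a i) ζ ≤ ε / 2 := (hkey m i hiS).trans hm.le
    calc dist (b i) ζ ≤ dist (b i) (a i) + dist (a i) ζ := dist_triangle _ _ _
      _ < ε / 2 + ε / 2 := add_lt_add_of_lt_of_le hbd haz
      _ = ε := by ring
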